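/- Fix T > 0, positive reals (c_j)_{j∈ψ} indexed by a nonempty finite set ψ, and a nonempty subset φ ⊆ ψ. For S ≥ 0 define ρ(S) = ∫_0^∞ ∏_{j∈ψ}(1 + max(e^t−1, T, S) c_j)^{-1} dt + (1/3)·(1 − ∏_{j∈ψ}(1 + S c_j)^{-1}) · ∫_0^∞ ∏_{i∈φ}(1 + max(e^t−1, T) c_i)^{-1} dt. Then for every S with 0 ≤ S < T, ρ(S) < ρ(T). -/

import Mathlib

open MeasureTheory

/-- The FFR normalized average rate at SIR threshold `S` and target SIR `T`
(uncorrelated sub-band case), with interference coefficients `c j > 0` over the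
full interferer set (the whole finite index type) and cell-edge interferer set `φ`. -/
noncomputable def ffrRate {ι : Type*} [Fintype ι] (φ : Finset ι) (c : ι → ℝ)
    (T S : ℝ) : ℝ :=
  (∫ t in Set.Ioi (0 : ℝ), ∏ j, (1 + max (max (Real.exp t - 1) T) S * c j)⁻¹)
    + (1/3) * (1 - ∏ j, (1 + S * c j)⁻¹) *
        ∫ t in Set.Ioi (0 : ℝ), ∏ i ∈ φ, (1 + max (Real.exp t - 1) T * c i)⁻¹

/-- Each factor of the cell-edge integrand is positive. -/
lemma ffr_factor_pos {T : ℝ} (hT : 0 < T) {ci : ℝ} (hci : 0 < ci) (t : ℝ) :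
    0 < 1 + max (Real.exp t - 1) T * ci := by
  have h1 : 0 < max (Real.exp t - 1) T := lt_of_lt_of_le hT (le_max_right _ _)
  have := mul_pos h1 hci
  linarith

/-- The cell-edge integrand is positive. -/
lemma ffr_integrand_pos {ι : Type*} (φ : Finset ι) (c : ι → ℝ)
    (hc : ∀ j, 0 < c j) {T : ℝ} (hT : 0 < T) (t : ℝ) :
    0 < ∏ i ∈ φ, (1 + max (Real.exp t - 1) T * c i)⁻¹ :=
  Finset.prod_pos fun i _ => inv_pos.2 (ffr_factor_pos hT (hc i) t)

/-- Integrability of the cell-edge integrand. -/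
lemma ffr_integrableOn {ι : Type*} (φ : Finset ι) (hφ : φ.Nonempty) (c : ι → ℝ)
    (hc : ∀ j, 0 < c j) {T : ℝ} (hT : 0 < T) :
    IntegrableOn (fun t : ℝ => ∏ i ∈ φ, (1 + max (Real.exp t - 1) T * c i)⁻¹)
      (Set.Ioi (0 : ℝ)) := by
  classical
  obtain ⟨i₀, hi₀⟩ := hφ
  set m : ℝ := min 1 (c i₀) with hm
  have hm0 : 0 < m := lt_min one_pos (hc i₀)
  apply Integrable.mono' (g := fun t : ℝ => m⁻¹ * Real.exp (-1 * t))
  · exact (exp_neg_integrableOn_Ioi 0 one_pos).const_mul _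
  · apply Continuous.aestronglyMeasurable
    apply continuous_finset_prod
    intro i _
    apply Continuous.inv₀
    · exact continuous_const.add (((Real.continuous_exp.sub continuous_const).max
        continuous_const).mul continuous_const)
    · intro t
      exact (ffr_factor_pos hT (hc i) t).ne'
  · filter_upwards [ae_restrict_mem measurableSet_Ioi] with t ht
    have he : (1 : ℝ) ≤ Real.exp t := Real.one_le_exp (le_of_lt ht)
    have hfpos := ffr_integrand_pos φ c hc hT t
    rw [Real.norm_of_nonneg hfpos.le]
    -- first bound the product by the single factor at i₀
    have hstep : (∏ i ∈ φ, (1 + max (Real.exp t - 1) T * c i)⁻¹)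
        ≤ (1 + max (Real.exp t - 1) T * c i₀)⁻¹ := by
      rw [← Finset.mul_prod_erase φ _ hi₀]
      have h1 : (∏ i ∈ φ.erase i₀, (1 + max (Real.exp t - 1) T * c i)⁻¹) ≤ 1 := by
        apply Finset.prod_le_one
        · intro i _; exact (inv_pos.2 (ffr_factor_pos hT (hc i) t)).le
        · intro i _
          apply inv_le_one_of_one_le₀
          have h2 : 0 < max (Real.exp t - 1) T * c i :=
            mul_pos (lt_of_lt_of_le hT (le_max_right _ _)) (hc i)
          linarith
      have h0 : 0 ≤ (1 + max (Real.exp t - 1) T * c i₀)⁻¹ :=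
        (inv_pos.2 (ffr_factor_pos hT (hc i₀) t)).le
      calc (1 + max (Real.exp t - 1) T * c i₀)⁻¹ *
              ∏ i ∈ φ.erase i₀, (1 + max (Real.exp t - 1) T * c i)⁻¹
          ≤ (1 + max (Real.exp t - 1) T * c i₀)⁻¹ * 1 :=
            mul_le_mul_of_nonneg_left h1 h0
        _ = (1 + max (Real.exp t - 1) T * c i₀)⁻¹ := mul_one _
    have hkey : m * Real.exp t ≤ 1 + max (Real.exp t - 1) T * c i₀ := by
      have hmax : Real.exp t - 1 ≤ max (Real.exp t - 1) T := le_max_left _ _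
      have hmul : (Real.exp t - 1) * c i₀ ≤ max (Real.exp t - 1) T * c i₀ :=
        mul_le_mul_of_nonneg_right hmax (hc i₀).le
      have hm1 : m ≤ 1 := min_le_left _ _
      have hmc : m ≤ c i₀ := min_le_right _ _
      nlinarith [mul_le_mul_of_nonneg_left he (sub_nonneg.2 hmc)]
    have hstep2 : (1 + max (Real.exp t - 1) T * c i₀)⁻¹ ≤ (m * Real.exp t)⁻¹ :=
      inv_anti₀ (mul_pos hm0 (Real.exp_pos t)) hkey
    have heq : (m * Real.exp t)⁻¹ = m⁻¹ * Real.exp (-1 * t) := by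
      rw [mul_inv, ← Real.exp_neg]
      ring_nf
    calc (∏ i ∈ φ, (1 + max (Real.exp t - 1) T * c i)⁻¹)
        ≤ (1 + max (Real.exp t - 1) T * c i₀)⁻¹ := hstep
      _ ≤ (m * Real.exp t)⁻¹ := hstep2
      _ = m⁻¹ * Real.exp (-1 * t) := heq

/-- Positivity of the cell-edge integral. -/
lemma ffr_integral_pos {ι : Type*} (φ : Finset ι) (hφ : φ.Nonempty) (c : ι → ℝ)
    (hc : ∀ j, 0 < c j) {T : ℝ} (hT : 0 < T) :
    0 < ∫ t in Set.Ioi (0 : ℝ), ∏ i ∈ φ, (1 + max (Real.exp t - 1) T * c i)⁻¹ := by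
  rw [setIntegral_pos_iff_support_of_nonneg_ae]
  · have hsup : Function.support
        (fun t : ℝ => ∏ i ∈ φ, (1 + max (Real.exp t - 1) T * c i)⁻¹)
        ∩ Set.Ioi (0 : ℝ) = Set.Ioi (0 : ℝ) := by
      apply Set.inter_eq_right.2
      intro t _
      exact (ffr_integrand_pos φ c hc hT t).ne'
    rw [hsup]
    simp [Real.volume_Ioi]
  · filter_upwards with t
    exact (ffr_integrand_pos φ c hc hT t).le
  · exact ffr_integrableOn φ hφ c hc hT

/-- every SIR threshold `S` with `0 ≤ S < T` gives a strictly smaller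
FFR normalized average rate than the threshold `S = T`. -/
theorem ffrRate_lt_of_lt_target
    {ι : Type*} [Fintype ι] [Nonempty ι]
    (φ : Finset ι) (hφ : φ.Nonempty)
    (c : ι → ℝ) (hc : ∀ j, 0 < c j)
    (T : ℝ) (hT : 0 < T) :
    ∀ S : ℝ, 0 ≤ S → S < T → ffrRate φ c T S < ffrRate φ c T T := by
  intro S hS hST
  have hA := ffr_integral_pos φ hφ c hc hT
  have hmax : ∀ t : ℝ, max (max (Real.exp t - 1) T) S
      = max (max (Real.exp t - 1) T) T := by
    intro t
    rw [max_eq_left (hST.le.trans (le_max_right _ _)), max_eq_left (le_max_right _ _)]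
  unfold ffrRate
  simp only [hmax]
  apply (add_lt_add_iff_left _).2
  have hP : (∏ j, (1 + T * c j)⁻¹) < ∏ j, (1 + S * c j)⁻¹ := by
    apply Finset.prod_lt_prod_of_nonempty
    · intro j _
      have := mul_pos hT (hc j)
      positivity
    · intro j _
      apply inv_strictAnti₀
      · nlinarith [mul_nonneg hS (hc j).le]
      · nlinarith [hc j]
    · exact Finset.univ_nonempty
  have h1 : (1 : ℝ) - ∏ j, (1 + S * c j)⁻¹ < 1 - ∏ j, (1 + T * c j)⁻¹ := by linarith
  have h2 := mul_lt_mul_of_pos_right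
    (mul_lt_mul_of_pos_left h1 (by norm_num : (0:ℝ) < 1/3)) hA
  linarith
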